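/- arXiv:2308.11360 — 2 statements merged into one kernel-verified Lean document; each statement's English description precedes it below -/
import Mathlib

section
/- Let R be a commutative ring with 2 = 0 and let A be a commutative (not necessarily associative) R-algebra. Suppose A has a direct sum decomposition A = A₀ ⊕ A₁ (as R-modules) with A₀·A₀ ⊆ A₀, A₁·A₁ ⊆ A₀, and A₀·A₁ ⊆ A₁. Then every idempotent element of A lies in A₀. -/
/-- If `R` is a commutative ring with `2 = 0` and `A` is a commutative
(not necessarily associative) `R`-algebra with a `ℤ/2ℤ`-graded direct sum
decomposition `A = A₀ ⊕ A₁`, then every idempotent of `A` lies in `A₀`. -/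
theorem stmt0 {R A : Type*} [CommRing R] [NonUnitalNonAssocCommRing A]
    [Module R A] [SMulCommClass R A A] [IsScalarTower R A A]
    (h2 : (2 : R) = 0)
    (A0 A1 : Submodule R A) (hcompl : IsCompl A0 A1)
    (h00 : ∀ u ∈ A0, ∀ v ∈ A0, u * v ∈ A0)
    (h11 : ∀ u ∈ A1, ∀ v ∈ A1, u * v ∈ A0)
    (h01 : ∀ u ∈ A0, ∀ v ∈ A1, u * v ∈ A1)
    (b : A) (hb : b * b = b) :
    b ∈ A0 := by
  obtain ⟨x, y, hx, hy, hxy⟩ :=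
    Submodule.codisjoint_iff_exists_add_eq.mp hcompl.codisjoint b
  have hchar : ∀ a : A, a + a = 0 := by
    intro a
    have : (2 : R) • a = 0 := by rw [h2, zero_smul]
    calc a + a = (2 : ℕ) • a := by rw [two_smul]
    _ = ((2 : ℕ) : R) • a := (Nat.cast_smul_eq_nsmul R 2 a).symm
    _ = 0 := by rw [Nat.cast_ofNat, this]
  have hb' : b = x * x + y * y := by
    have : b = (x + y) * (x + y) := by rw [hxy, hb]
    rw [this, add_mul, mul_add, mul_add, mul_comm y x]
    calc x * x + x * y + (x * y + y * y) = x * x + y * y + (x * y + x * y) := by abel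
    _ = x * x + y * y := by rw [hchar (x * y), add_zero]
  rw [hb']
  exact A0.add_mem (h00 x hx x hx) (h11 y hy y hy)
end

section
/- Let A be the nilpotent Matsuo algebra of the affine plane of order 3 over a field of characteristic 2, and let ℓ = {a₁,a₂,a₃} be a line, with m and n the two other lines in the parallel class of ℓ. Then the 0-eigenspace of ad_{s_ℓ} is span{a₁,a₂,a₃,s} (where s is the sum of all 9 points), the 1-eigenspace is the 4-dimensional space spanned by b_i + b_j and c_i + c_j for points b_i ∈ m, c_i ∈ n, and the generalized 0-eigenspace is span{a₁,a₂,a₃,s_m,s_n}; in particular ad_{s_ℓ} is not semisimple, and A is the direct sum of the generalized 0-eigenspace and the 1-eigenspace. -/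
/-- `A` is the nilpotent Matsuo algebra (char 2) of the geometry `(col, third)`,
with `e` the natural basis indexed by the points. -/
structure IsNilMatsuo (R : Type*) {A P : Type*} [CommRing R] [NonUnitalNonAssocCommRing A]
    [Module R A] (col : P → P → Prop) (third : P → P → P) (e : P → A) : Prop where
  char2 : (2 : R) = 0
  mul_same : ∀ p, e p * e p = 0
  mul_of_not_col : ∀ p q, p ≠ q → ¬ col p q → e p * e q = 0
  mul_of_col : ∀ p q, p ≠ q → col p q → e p * e q = e p + e q + e (third p q)

/-- Collinearity in the affine plane of order 3: any two distinct points. -/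
def APcol (u v : ZMod 3 × ZMod 3) : Prop := u ≠ v

/-- Third point on the line through two distinct points of the affine plane of order 3. -/
def APthird (u v : ZMod 3 × ZMod 3) : ZMod 3 × ZMod 3 := -(u + v)

/- ### Auxiliary machinery -/

/-- The nine points of the plane, as offsets from a base point, in terms of the direction `d`
of a line and a transversal direction `t`. -/
def Qv (d t : ZMod 3 × ZMod 3) : Fin 9 → ZMod 3 × ZMod 3 :=
  ![0, d, -d, t, t + d, t - d, -t, -t + d, -t - d]

/-- Index table for the third point on the line through two points. -/
def Tm : Fin 9 → Fin 9 → Fin 9 :=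
  ![![0,2,1,6,8,7,3,5,4], ![2,1,0,8,7,6,5,4,3], ![1,0,2,7,6,8,4,3,5],
    ![6,8,7,3,5,4,0,2,1], ![8,7,6,5,4,3,2,1,0], ![7,6,8,4,3,5,1,0,2],
    ![3,5,4,0,2,1,6,8,7], ![5,4,3,2,1,0,8,7,6], ![4,3,5,1,0,2,7,6,8]]

lemma Qv_inj : ∀ d t : ZMod 3 × ZMod 3, d ≠ 0 → t ≠ 0 → t ≠ d → t ≠ -d →
    ∀ i j : Fin 9, Qv d t i = Qv d t j → i = j := by decide

lemma Qv_third : ∀ (d t : ZMod 3 × ZMod 3) (n m : Fin 9),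
    -(Qv d t n + Qv d t m) = Qv d t (Tm n m) := by decide

lemma neg_shift : ∀ (q x y : ZMod 3 × ZMod 3), -((q + x) + (q + y)) = q + -(x + y) := by decide

lemma Qv_vals : ∀ (q d t : ZMod 3 × ZMod 3),
    q + Qv d t 0 = q ∧ q + Qv d t 1 = q + d ∧ q + Qv d t 2 = q - d ∧
    q + Qv d t 3 = q + t ∧ q + Qv d t 4 = q + t + d ∧ q + Qv d t 5 = q + t - d ∧
    q + Qv d t 6 = q - t ∧ q + Qv d t 7 = q - t + d ∧ q + Qv d t 8 = q - t - d := by decide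

lemma sum9 {M : Type*} [AddCommMonoid M] (f : Fin 9 → M) :
    ∑ i, f i = f 0 + f 1 + f 2 + f 3 + f 4 + f 5 + f 6 + f 7 + f 8 := by
  simp [Fin.sum_univ_succ, add_assoc]

/-- Nilpotent Matsuo algebra of the affine plane of order 3 over a field of
characteristic 2: for a line ℓ = {p, p+d, p-d} with parallel lines
m = {p+t, p+t+d, p+t-d} and n = {p-t, p-t+d, p-t-d}, the 0-eigenspace of `ad_{s_ℓ}`
is `span{p, p+d, p-d, s}` (s the sum of all 9 points), the 1-eigenspace is the
4-dimensional span of the sums of two distinct points of m resp. n, the generalized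
0-eigenspace is `span{p, p+d, p-d, s_m, s_n}`; in particular `ad_{s_ℓ}` is not
semisimple, and A is the direct sum of the generalized 0-eigenspace and the
1-eigenspace. -/
theorem stmt11 {k A : Type*} [Field k] [NonUnitalNonAssocCommRing A]
    [Module k A] [SMulCommClass k A A] [IsScalarTower k A A]
    (e : Module.Basis (ZMod 3 × ZMod 3) k A) (hM : IsNilMatsuo k APcol APthird ⇑e)
    (p d t : ZMod 3 × ZMod 3) (hd : d ≠ 0) (ht : t ∉ ({0, d, -d} : Set (ZMod 3 × ZMod 3)))
    (sl sm sn S : A)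
    (hsl : sl = e p + e (p + d) + e (p - d))
    (hsm : sm = e (p + t) + e (p + t + d) + e (p + t - d))
    (hsn : sn = e (p - t) + e (p - t + d) + e (p - t - d))
    (hS : S = ∑ w : ZMod 3 × ZMod 3, e w) :
    Module.End.eigenspace (LinearMap.mulLeft k sl) 0 =
        Submodule.span k {e p, e (p + d), e (p - d), S} ∧
      Module.End.eigenspace (LinearMap.mulLeft k sl) 1 =
        Submodule.span k {e (p + t) + e (p + t + d), e (p + t) + e (p + t - d),
          e (p - t) + e (p - t + d), e (p - t) + e (p - t - d)} ∧
      Module.finrank k (Module.End.eigenspace (LinearMap.mulLeft k sl) 1) = 4 ∧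
      Module.End.maxGenEigenspace (LinearMap.mulLeft k sl) 0 =
        Submodule.span k {e p, e (p + d), e (p - d), sm, sn} ∧
      Module.End.maxGenEigenspace (LinearMap.mulLeft k sl) 0 ≠
        Module.End.eigenspace (LinearMap.mulLeft k sl) 0 ∧
      IsCompl (Module.End.maxGenEigenspace (LinearMap.mulLeft k sl) 0)
        (Module.End.eigenspace (LinearMap.mulLeft k sl) 1) := by
  classical
  obtain ⟨h2k, hmsame, -, hmc⟩ := hM
  have h2 : ∀ x : A, x + x = 0 := fun x => by
    have h := two_smul k x
    rw [h2k, zero_smul] at h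
    exact h.symm
  have h2' : ∀ x : A, (2 : ℤ) • x = 0 := fun x => by rw [two_zsmul, h2]
  have h3' : ∀ x : A, (3 : ℤ) • x = x := fun x => by
    rw [show (3:ℤ) = 2 + 1 by norm_num, add_zsmul, h2', one_zsmul, zero_add]
  have hzs : ∀ (n : ℤ) (x : A), (2 * n) • x = 0 := fun n x => by
    rw [mul_comm, mul_zsmul, h2', smul_zero]
  have h4' : ∀ x : A, (4 : ℤ) • x = 0 := fun x => hzs 2 x
  have h6' : ∀ x : A, (6 : ℤ) • x = 0 := fun x => hzs 3 x
  have h8' : ∀ x : A, (8 : ℤ) • x = 0 := fun x => hzs 4 x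
  have h5' : ∀ x : A, (5 : ℤ) • x = x := fun x => by
    rw [show (5:ℤ) = 4 + 1 by norm_num, add_zsmul, h4', one_zsmul, zero_add]
  have h7' : ∀ x : A, (7 : ℤ) • x = x := fun x => by
    rw [show (7:ℤ) = 6 + 1 by norm_num, add_zsmul, h6', one_zsmul, zero_add]
  have h9' : ∀ x : A, (9 : ℤ) • x = x := fun x => by
    rw [show (9:ℤ) = 8 + 1 by norm_num, add_zsmul, h8', one_zsmul, zero_add]
  simp only [Set.mem_insert_iff, Set.mem_singleton_iff, not_or] at ht
  obtain ⟨ht0, htd, htd'⟩ := ht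
  obtain ⟨q0, q1, q2, q3, q4, q5, q6, q7, q8⟩ := Qv_vals p d t
  set E : Fin 9 → A := fun i => e (p + Qv d t i) with hEdef
  have hEi : ∀ i, E i = e (p + Qv d t i) := fun i => rfl
  have hE0 : e p = E 0 := by rw [hEi 0, q0]
  have hE1 : e (p + d) = E 1 := by rw [hEi 1, q1]
  have hE2 : e (p - d) = E 2 := by rw [hEi 2, q2]
  have hE3 : e (p + t) = E 3 := by rw [hEi 3, q3]
  have hE4 : e (p + t + d) = E 4 := by rw [hEi 4, q4]
  have hE5 : e (p + t - d) = E 5 := by rw [hEi 5, q5]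
  have hE6 : e (p - t) = E 6 := by rw [hEi 6, q6]
  have hE7 : e (p - t + d) = E 7 := by rw [hEi 7, q7]
  have hE8 : e (p - t - d) = E 8 := by rw [hEi 8, q8]
  rw [hE0, hE1, hE2, hE3, hE4, hE5, hE6, hE7, hE8]
  rw [hE0, hE1, hE2] at hsl
  rw [hE3, hE4, hE5] at hsm
  rw [hE6, hE7, hE8] at hsn
  have hbijP : Function.Bijective (fun i => p + Qv d t i) := by
    have hinj : Function.Injective (fun i : Fin 9 => p + Qv d t i) := fun i j h =>
      Qv_inj d t hd ht0 htd htd' i j (add_left_cancel h)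
    exact (Fintype.bijective_iff_injective_and_card _).mpr ⟨hinj, by decide⟩
  have hSE : S = E 0 + E 1 + E 2 + E 3 + E 4 + E 5 + E 6 + E 7 + E 8 := by
    rw [hS, ← Fintype.sum_bijective _ hbijP E e (fun i => hEi i), sum9]
  have hmul0 : ∀ n, E n * E n = 0 := fun n => by rw [hEi]; exact hmsame _
  have hmul : ∀ n m, n ≠ m → E n * E m = E n + E m + E (Tm n m) := by
    intro n m hnm
    have hne : p + Qv d t n ≠ p + Qv d t m := fun h =>
      hnm (Qv_inj d t hd ht0 htd htd' n m (add_left_cancel h))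
    have h3 : APthird (p + Qv d t n) (p + Qv d t m) = p + Qv d t (Tm n m) := by
      show -((p + Qv d t n) + (p + Qv d t m)) = _
      rw [neg_shift, Qv_third]
    rw [hEi n, hEi m, hEi (Tm n m), hmc _ _ hne hne, h3]
  have L0 : sl * E 0 = 0 := by
    rw [hsl, add_mul, add_mul, hmul0, hmul 1 0 (by decide), hmul 2 0 (by decide),
      show Tm 1 0 = 2 from rfl, show Tm 2 0 = 1 from rfl]
    abel_nf
    try simp [h2', h3', h4', h5', h6', h7', h8', h9']
  have L1 : sl * E 1 = 0 := by
    rw [hsl, add_mul, add_mul, hmul0, hmul 0 1 (by decide), hmul 2 1 (by decide),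
      show Tm 0 1 = 2 from rfl, show Tm 2 1 = 0 from rfl]
    abel_nf
    try simp [h2', h3', h4', h5', h6', h7', h8', h9']
  have L2 : sl * E 2 = 0 := by
    rw [hsl, add_mul, add_mul, hmul0, hmul 0 2 (by decide), hmul 1 2 (by decide),
      show Tm 0 2 = 1 from rfl, show Tm 1 2 = 0 from rfl]
    abel_nf
    try simp [h2', h3', h4', h5', h6', h7', h8', h9']
  have L3 : sl * E 3 = E 3 + (E 0 + E 1 + E 2) + (E 6 + E 7 + E 8) := by
    rw [hsl, add_mul, add_mul, hmul 0 3 (by decide), hmul 1 3 (by decide),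
      hmul 2 3 (by decide), show Tm 0 3 = 6 from rfl, show Tm 1 3 = 8 from rfl,
      show Tm 2 3 = 7 from rfl]
    abel_nf
    try simp [h2', h3', h4', h5', h6', h7', h8', h9']
    try abel
  have L4 : sl * E 4 = E 4 + (E 0 + E 1 + E 2) + (E 6 + E 7 + E 8) := by
    rw [hsl, add_mul, add_mul, hmul 0 4 (by decide), hmul 1 4 (by decide),
      hmul 2 4 (by decide), show Tm 0 4 = 8 from rfl, show Tm 1 4 = 7 from rfl,
      show Tm 2 4 = 6 from rfl]
    abel_nf
    try simp [h2', h3', h4', h5', h6', h7', h8', h9']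
    try abel
  have L5 : sl * E 5 = E 5 + (E 0 + E 1 + E 2) + (E 6 + E 7 + E 8) := by
    rw [hsl, add_mul, add_mul, hmul 0 5 (by decide), hmul 1 5 (by decide),
      hmul 2 5 (by decide), show Tm 0 5 = 7 from rfl, show Tm 1 5 = 6 from rfl,
      show Tm 2 5 = 8 from rfl]
    abel_nf
    try simp [h2', h3', h4', h5', h6', h7', h8', h9']
    try abel
  have L6 : sl * E 6 = E 6 + (E 0 + E 1 + E 2) + (E 3 + E 4 + E 5) := by
    rw [hsl, add_mul, add_mul, hmul 0 6 (by decide), hmul 1 6 (by decide),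
      hmul 2 6 (by decide), show Tm 0 6 = 3 from rfl, show Tm 1 6 = 5 from rfl,
      show Tm 2 6 = 4 from rfl]
    abel_nf
    try simp [h2', h3', h4', h5', h6', h7', h8', h9']
    try abel
  have L7 : sl * E 7 = E 7 + (E 0 + E 1 + E 2) + (E 3 + E 4 + E 5) := by
    rw [hsl, add_mul, add_mul, hmul 0 7 (by decide), hmul 1 7 (by decide),
      hmul 2 7 (by decide), show Tm 0 7 = 5 from rfl, show Tm 1 7 = 4 from rfl,
      show Tm 2 7 = 3 from rfl]
    abel_nf
    try simp [h2', h3', h4', h5', h6', h7', h8', h9']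
    try abel
  have L8 : sl * E 8 = E 8 + (E 0 + E 1 + E 2) + (E 3 + E 4 + E 5) := by
    rw [hsl, add_mul, add_mul, hmul 0 8 (by decide), hmul 1 8 (by decide),
      hmul 2 8 (by decide), show Tm 0 8 = 4 from rfl, show Tm 1 8 = 3 from rfl,
      show Tm 2 8 = 5 from rfl]
    abel_nf
    try simp [h2', h3', h4', h5', h6', h7', h8', h9']
    try abel
  have Lsm : sl * sm = S := by
    rw [hsm, hSE, mul_add, mul_add, L3, L4, L5]
    abel_nf
    try simp [h2', h3', h4', h5', h6', h7', h8', h9']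
    try abel
  have Lsn : sl * sn = S := by
    rw [hsn, hSE, mul_add, mul_add, L6, L7, L8]
    abel_nf
    try simp [h2', h3', h4', h5', h6', h7', h8', h9']
    try abel
  have LS : sl * S = 0 := by
    rw [hSE]
    simp only [mul_add]
    rw [L0, L1, L2, L3, L4, L5, L6, L7, L8]
    abel_nf
    try simp [h2', h3', h4', h5', h6', h7', h8', h9']
    try abel
  have L34 : sl * (E 3 + E 4) = E 3 + E 4 := by
    rw [mul_add, L3, L4]; abel_nf; try simp [h2', h3', h4', h5', h6', h7', h8', h9']; try abel
  have L35 : sl * (E 3 + E 5) = E 3 + E 5 := by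
    rw [mul_add, L3, L5]; abel_nf; try simp [h2', h3', h4', h5', h6', h7', h8', h9']; try abel
  have L67 : sl * (E 6 + E 7) = E 6 + E 7 := by
    rw [mul_add, L6, L7]; abel_nf; try simp [h2', h3', h4', h5', h6', h7', h8', h9']; try abel
  have L68 : sl * (E 6 + E 8) = E 6 + E 8 := by
    rw [mul_add, L6, L8]; abel_nf; try simp [h2', h3', h4', h5', h6', h7', h8', h9']; try abel
  haveI : FiniteDimensional k A := Module.Basis.finiteDimensional_of_finite e
  have hcard : Fintype.card (Fin 9) = Module.finrank k A := by
    rw [Module.finrank_eq_card_basis e]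
    simp [Fintype.card_prod]
  set u : Fin 9 → A := ![E 0, E 1, E 2, S, sm, E 3 + E 4, E 3 + E 5, E 6 + E 7, E 6 + E 8]
    with hudef
  have hu0 : u 0 = E 0 := rfl
  have hu1 : u 1 = E 1 := rfl
  have hu2 : u 2 = E 2 := rfl
  have hu3 : u 3 = S := rfl
  have hu4 : u 4 = sm := rfl
  have hu5 : u 5 = E 3 + E 4 := rfl
  have hu6 : u 6 = E 3 + E 5 := rfl
  have hu7 : u 7 = E 6 + E 7 := rfl
  have hu8 : u 8 = E 6 + E 8 := rfl
  have hTop : ⊤ ≤ Submodule.span k (Set.range u) := by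
    rw [← e.span_eq, Submodule.span_le]
    rintro x ⟨w, rfl⟩
    obtain ⟨i, rfl⟩ := hbijP.surjective w
    have mem : ∀ j, u j ∈ Submodule.span k (Set.range u) := fun j =>
      Submodule.subset_span ⟨j, rfl⟩
    have hm3 : E 3 ∈ Submodule.span k (Set.range u) := by
      have h : E 3 = u 4 + u 5 + u 6 := by
        rw [hu4, hu5, hu6, hsm]; abel_nf; try simp [h2', h3', h4', h5', h6', h7', h8', h9']
        try abel
      rw [h]; exact add_mem (add_mem (mem 4) (mem 5)) (mem 6)
    have hm4 : E 4 ∈ Submodule.span k (Set.range u) := by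
      have h : E 4 = u 4 + u 6 := by
        rw [hu4, hu6, hsm]; abel_nf; try simp [h2', h3', h4', h5', h6', h7', h8', h9']
        try abel
      rw [h]; exact add_mem (mem 4) (mem 6)
    have hm5 : E 5 ∈ Submodule.span k (Set.range u) := by
      have h : E 5 = u 4 + u 5 := by
        rw [hu4, hu5, hsm]; abel_nf; try simp [h2', h3', h4', h5', h6', h7', h8', h9']
        try abel
      rw [h]; exact add_mem (mem 4) (mem 5)
    have hm6 : E 6 ∈ Submodule.span k (Set.range u) := by
      have h : E 6 = u 3 + u 0 + u 1 + u 2 + u 4 + u 7 + u 8 := by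
        rw [hu3, hu0, hu1, hu2, hu4, hu7, hu8, hSE, hsm]
        abel_nf; try simp [h2', h3', h4', h5', h6', h7', h8', h9']
        try abel
      rw [h]
      exact add_mem (add_mem (add_mem (add_mem (add_mem (add_mem (mem 3) (mem 0)) (mem 1))
        (mem 2)) (mem 4)) (mem 7)) (mem 8)
    have hm7 : E 7 ∈ Submodule.span k (Set.range u) := by
      have h : E 7 = u 3 + u 0 + u 1 + u 2 + u 4 + u 8 := by
        rw [hu3, hu0, hu1, hu2, hu4, hu8, hSE, hsm]
        abel_nf; try simp [h2', h3', h4', h5', h6', h7', h8', h9']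
        try abel
      rw [h]
      exact add_mem (add_mem (add_mem (add_mem (add_mem (mem 3) (mem 0)) (mem 1)) (mem 2))
        (mem 4)) (mem 8)
    have hm8 : E 8 ∈ Submodule.span k (Set.range u) := by
      have h : E 8 = u 3 + u 0 + u 1 + u 2 + u 4 + u 7 := by
        rw [hu3, hu0, hu1, hu2, hu4, hu7, hSE, hsm]
        abel_nf; try simp [h2', h3', h4', h5', h6', h7', h8', h9']
        try abel
      rw [h]
      exact add_mem (add_mem (add_mem (add_mem (add_mem (mem 3) (mem 0)) (mem 1)) (mem 2))
        (mem 4)) (mem 7)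
    have hEM : ∀ j : Fin 9, E j ∈ Submodule.span k (Set.range u) := by
      intro j
      fin_cases j
      exacts [mem 0, mem 1, mem 2, hm3, hm4, hm5, hm6, hm7, hm8]
    exact (hEi i) ▸ hEM i
  set b : Module.Basis (Fin 9) k A := basisOfTopLeSpanOfCardEqFinrank u hTop hcard with hbdef
  have hb : ⇑b = u := by rw [hbdef]; exact coe_basisOfTopLeSpanOfCardEqFinrank u hTop hcard
  have hext : ∀ (x : A) (g : Fin 9 → k),
      x = g 0 • u 0 + g 1 • u 1 + g 2 • u 2 + g 3 • u 3 + g 4 • u 4 + g 5 • u 5 + g 6 • u 6 +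
        g 7 • u 7 + g 8 • u 8 → ∀ i, b.repr x i = g i := by
    intro x g hx i
    have hx' : x = b.equivFun.symm g := by
      rw [Module.Basis.equivFun_symm_apply, hb, sum9]
      exact hx
    rw [hx']
    have h := b.equivFun.apply_symm_apply g
    rw [Module.Basis.equivFun_apply] at h
    exact congrFun h i
  have hveq : ∀ v : A, v = b.repr v 0 • u 0 + b.repr v 1 • u 1 + b.repr v 2 • u 2 +
      b.repr v 3 • u 3 + b.repr v 4 • u 4 + b.repr v 5 • u 5 + b.repr v 6 • u 6 +
      b.repr v 7 • u 7 + b.repr v 8 • u 8 := by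
    intro v
    have h := Module.Basis.sum_repr b v
    rw [hb, sum9] at h
    exact h.symm
  have hLv : ∀ v : A, sl * v = b.repr v 4 • S + b.repr v 5 • (E 3 + E 4) +
      b.repr v 6 • (E 3 + E 5) + b.repr v 7 • (E 6 + E 7) + b.repr v 8 • (E 6 + E 8) := by
    intro v
    conv_lhs => rw [hveq v]
    rw [hu0, hu1, hu2, hu3, hu4, hu5, hu6, hu7, hu8]
    simp only [mul_add]
    simp only [mul_smul_comm]
    rw [L0, L1, L2, LS, Lsm, L34, L35, L67, L68]
    simp only [smul_zero, zero_add]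
  have hext9 : ∀ (x : A) (c0 c1 c2 c3 c4 c5 c6 c7 c8 : k),
      x = c0 • u 0 + c1 • u 1 + c2 • u 2 + c3 • u 3 + c4 • u 4 + c5 • u 5 + c6 • u 6 +
        c7 • u 7 + c8 • u 8 →
      b.repr x 0 = c0 ∧ b.repr x 1 = c1 ∧ b.repr x 2 = c2 ∧ b.repr x 3 = c3 ∧
      b.repr x 4 = c4 ∧ b.repr x 5 = c5 ∧ b.repr x 6 = c6 ∧ b.repr x 7 = c7 ∧
      b.repr x 8 = c8 := by
    intro x c0 c1 c2 c3 c4 c5 c6 c7 c8 hx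
    have h := hext x ![c0,c1,c2,c3,c4,c5,c6,c7,c8] hx
    exact ⟨h 0, h 1, h 2, h 3, h 4, h 5, h 6, h 7, h 8⟩
  have hG1 : Module.End.eigenspace (LinearMap.mulLeft k sl) 0 =
      Submodule.span k {E 0, E 1, E 2, S} := by
    apply le_antisymm
    · intro v hv
      rw [Module.End.mem_eigenspace_iff, zero_smul, LinearMap.mulLeft_apply] at hv
      obtain ⟨-, -, -, m3, -, m5, m6, m7, m8⟩ := hext9 (sl * v) 0 0 0 (b.repr v 4) 0
        (b.repr v 5) (b.repr v 6) (b.repr v 7) (b.repr v 8) (by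
          rw [hLv v, hu3, hu5, hu6, hu7, hu8]
          simp only [zero_smul, zero_add, add_zero])
      rw [hv] at m3 m5 m6 m7 m8
      simp only [map_zero, Finsupp.coe_zero, Pi.zero_apply] at m3 m5 m6 m7 m8
      rw [hveq v, ← m3, ← m5, ← m6, ← m7, ← m8]
      simp only [zero_smul, add_zero]
      rw [hu0, hu1, hu2, hu3]
      refine add_mem (add_mem (add_mem ?_ ?_) ?_) ?_ <;>
        exact Submodule.smul_mem _ _ (Submodule.subset_span (by simp))
    · rw [Submodule.span_le]
      rintro x hx
      simp only [Set.mem_insert_iff, Set.mem_singleton_iff] at hx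
      have hmem : ∀ y : A, sl * y = 0 →
          y ∈ Module.End.eigenspace (LinearMap.mulLeft k sl) 0 := by
        intro y hy
        rw [Module.End.mem_eigenspace_iff, zero_smul, LinearMap.mulLeft_apply]
        exact hy
      rcases hx with rfl | rfl | rfl | rfl
      exacts [hmem _ L0, hmem _ L1, hmem _ L2, hmem _ LS]
  have hG2 : Module.End.eigenspace (LinearMap.mulLeft k sl) 1 =
      Submodule.span k {E 3 + E 4, E 3 + E 5, E 6 + E 7, E 6 + E 8} := by
    apply le_antisymm
    · intro v hv
      rw [Module.End.mem_eigenspace_iff, one_smul, LinearMap.mulLeft_apply] at hv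
      obtain ⟨m0, m1, m2, m3, m4, -, -, -, -⟩ := hext9 (sl * v) 0 0 0 (b.repr v 4) 0
        (b.repr v 5) (b.repr v 6) (b.repr v 7) (b.repr v 8) (by
          rw [hLv v, hu3, hu5, hu6, hu7, hu8]
          simp only [zero_smul, zero_add, add_zero])
      rw [hv] at m0 m1 m2 m3 m4
      have z3 : b.repr v 3 = 0 := m3.trans m4
      rw [hveq v, m0, m1, m2, z3, m4]
      simp only [zero_smul, zero_add, add_zero]
      rw [hu5, hu6, hu7, hu8]
      refine add_mem (add_mem (add_mem ?_ ?_) ?_) ?_ <;>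
        exact Submodule.smul_mem _ _ (Submodule.subset_span (by simp))
    · rw [Submodule.span_le]
      rintro x hx
      simp only [Set.mem_insert_iff, Set.mem_singleton_iff] at hx
      have hmem : ∀ y : A, sl * y = y →
          y ∈ Module.End.eigenspace (LinearMap.mulLeft k sl) 1 := by
        intro y hy
        rw [Module.End.mem_eigenspace_iff, one_smul, LinearMap.mulLeft_apply]
        exact hy
      rcases hx with rfl | rfl | rfl | rfl
      exacts [hmem _ L34, hmem _ L35, hmem _ L67, hmem _ L68]
  have hG3 : Module.finrank k (Module.End.eigenspace (LinearMap.mulLeft k sl) 1) = 4 := by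
    rw [hG2]
    have hrange : Set.range (⇑b ∘ (![5,6,7,8] : Fin 4 → Fin 9)) =
        {E 3 + E 4, E 3 + E 5, E 6 + E 7, E 6 + E 8} := by
      rw [hb]
      ext x
      simp only [Set.mem_range, Function.comp_apply, Set.mem_insert_iff,
        Set.mem_singleton_iff]
      constructor
      · rintro ⟨i, rfl⟩
        fin_cases i
        · exact Or.inl hu5
        · exact Or.inr (Or.inl hu6)
        · exact Or.inr (Or.inr (Or.inl hu7))
        · exact Or.inr (Or.inr (Or.inr hu8))
      · rintro (rfl | rfl | rfl | rfl)
        exacts [⟨0, hu5⟩, ⟨1, hu6⟩, ⟨2, hu7⟩, ⟨3, hu8⟩]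
    rw [← hrange]
    have hinj : Function.Injective (![5,6,7,8] : Fin 4 → Fin 9) := by
      have : ∀ i j : Fin 4, (![5,6,7,8] : Fin 4 → Fin 9) i = ![5,6,7,8] j → i = j := by
        decide
      exact this
    have hli : LinearIndependent k (⇑b ∘ (![5,6,7,8] : Fin 4 → Fin 9)) :=
      b.linearIndependent.comp _ hinj
    have h4 := finrank_span_eq_card hli
    exact h4
  have hSsum : S = E 0 + E 1 + E 2 + sm + sn := by rw [hSE, hsm, hsn]; abel
  have hG4 : Module.End.maxGenEigenspace (LinearMap.mulLeft k sl) 0 =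
      Submodule.span k {E 0, E 1, E 2, sm, sn} := by
    apply le_antisymm
    · intro v hv
      rw [Module.End.mem_maxGenEigenspace] at hv
      simp only [zero_smul, sub_zero] at hv
      obtain ⟨nn, hn⟩ := hv
      have hvmem : b.repr v 5 = 0 → b.repr v 6 = 0 → b.repr v 7 = 0 → b.repr v 8 = 0 →
          v ∈ Submodule.span k {E 0, E 1, E 2, sm, sn} := by
        intro z5 z6 z7 z8
        have hSmem : S ∈ Submodule.span k {E 0, E 1, E 2, sm, sn} := by
          rw [hSsum]
          refine add_mem (add_mem (add_mem (add_mem ?_ ?_) ?_) ?_) ?_ <;>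
            exact Submodule.subset_span (by simp)
        rw [hveq v, z5, z6, z7, z8]
        simp only [zero_smul, add_zero]
        rw [hu0, hu1, hu2, hu3, hu4]
        refine add_mem (add_mem (add_mem (add_mem ?_ ?_) ?_)
          (Submodule.smul_mem _ _ hSmem)) ?_ <;>
          exact Submodule.smul_mem _ _ (Submodule.subset_span (by simp))
      have hW : sl * (sl * v) = b.repr v 5 • (E 3 + E 4) + b.repr v 6 • (E 3 + E 5) +
          b.repr v 7 • (E 6 + E 7) + b.repr v 8 • (E 6 + E 8) := by
        rw [hLv v]
        simp only [mul_add]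
        simp only [mul_smul_comm]
        rw [LS, L34, L35, L67, L68]
        simp only [smul_zero, zero_add]
      obtain ⟨-, -, -, -, -, k5, k6, k7, k8⟩ := hext9 (sl * (sl * v)) 0 0 0 0 0
        (b.repr v 5) (b.repr v 6) (b.repr v 7) (b.repr v 8) (by
          rw [hW, hu5, hu6, hu7, hu8]
          simp only [zero_smul, zero_add])
      match nn, hn with
      | 0, hn =>
        simp only [pow_zero, Module.End.one_apply] at hn
        rw [hn]
        exact zero_mem _
      | 1, hn =>
        rw [pow_one, LinearMap.mulLeft_apply] at hn
        obtain ⟨-, -, -, -, -, m5, m6, m7, m8⟩ := hext9 (sl * v) 0 0 0 (b.repr v 4) 0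
          (b.repr v 5) (b.repr v 6) (b.repr v 7) (b.repr v 8) (by
            rw [hLv v, hu3, hu5, hu6, hu7, hu8]
            simp only [zero_smul, zero_add, add_zero])
        rw [hn] at m5 m6 m7 m8
        simp only [map_zero, Finsupp.coe_zero, Pi.zero_apply] at m5 m6 m7 m8
        exact hvmem m5.symm m6.symm m7.symm m8.symm
      | (m+2), hn =>
        have hfix : sl * (sl * (sl * v)) = sl * (sl * v) := by
          conv_lhs => rw [hW]
          rw [hW]
          simp only [mul_add]
          simp only [mul_smul_comm]
          rw [L34, L35, L67, L68]
        have hWfix : ∀ mm : ℕ, ((LinearMap.mulLeft k sl)^mm) (sl * (sl * v)) =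
            sl * (sl * v) := by
          intro mm
          induction mm with
          | zero => simp
          | succ q ih =>
            rw [pow_succ', Module.End.mul_apply, LinearMap.mulLeft_apply, ih, hfix]
        have hL2 : ((LinearMap.mulLeft k sl)^(m+2)) v = sl * (sl * v) := by
          rw [pow_add, Module.End.mul_apply, pow_two, Module.End.mul_apply,
            LinearMap.mulLeft_apply, LinearMap.mulLeft_apply]
          exact hWfix m
        rw [hL2] at hn
        rw [hn] at k5 k6 k7 k8
        simp only [map_zero, Finsupp.coe_zero, Pi.zero_apply] at k5 k6 k7 k8
        exact hvmem k5.symm k6.symm k7.symm k8.symm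
    · rw [Submodule.span_le]
      rintro x hx
      simp only [Set.mem_insert_iff, Set.mem_singleton_iff] at hx
      have hmm : ∀ y : A, sl * (sl * y) = 0 →
          y ∈ Module.End.maxGenEigenspace (LinearMap.mulLeft k sl) 0 := by
        intro y hy
        rw [Module.End.mem_maxGenEigenspace]
        refine ⟨2, ?_⟩
        simp only [zero_smul, sub_zero]
        rw [pow_two, Module.End.mul_apply, LinearMap.mulLeft_apply,
          LinearMap.mulLeft_apply]
        exact hy
      rcases hx with rfl | rfl | rfl | rfl | rfl
      · exact hmm _ (by rw [L0, mul_zero])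
      · exact hmm _ (by rw [L1, mul_zero])
      · exact hmm _ (by rw [L2, mul_zero])
      · exact hmm _ (by rw [Lsm, LS])
      · exact hmm _ (by rw [Lsn, LS])
  have hG5 : Module.End.maxGenEigenspace (LinearMap.mulLeft k sl) 0 ≠
      Module.End.eigenspace (LinearMap.mulLeft k sl) 0 := by
    intro hEq
    have hmemsm : sm ∈ Module.End.eigenspace (LinearMap.mulLeft k sl) 0 := by
      rw [← hEq, hG4]
      exact Submodule.subset_span (by simp)
    rw [Module.End.mem_eigenspace_iff, zero_smul, LinearMap.mulLeft_apply, Lsm] at hmemsm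
    have hne : u 3 ≠ 0 := hb ▸ b.ne_zero 3
    exact hne (hu3.trans hmemsm)
  have hG6 : IsCompl (Module.End.maxGenEigenspace (LinearMap.mulLeft k sl) 0)
      (Module.End.eigenspace (LinearMap.mulLeft k sl) 1) := by
    rw [hG4, hG2]
    have hA : Submodule.span k {E 0, E 1, E 2, sm, sn} =
        Submodule.span k (⇑b '' {0,1,2,3,4}) := by
      rw [hb]
      have himg : u '' {0,1,2,3,4} = {u 0, u 1, u 2, u 3, u 4} := by
        simp [Set.image_insert_eq]
      rw [himg]
      have hsn2 : sn = u 3 - u 0 - u 1 - u 2 - u 4 := by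
        rw [hu3, hu0, hu1, hu2, hu4, hSsum]
        abel
      apply le_antisymm <;> rw [Submodule.span_le] <;> rintro x hx <;>
        simp only [Set.mem_insert_iff, Set.mem_singleton_iff] at hx
      · rcases hx with h | h | h | h | h <;> rw [h]
        · exact Submodule.subset_span (by simp [hu0])
        · exact Submodule.subset_span (by simp [hu1])
        · exact Submodule.subset_span (by simp [hu2])
        · exact Submodule.subset_span (by simp [hu4])
        · rw [hsn2]
          refine sub_mem (sub_mem (sub_mem (sub_mem ?_ ?_) ?_) ?_) ?_ <;>
            exact Submodule.subset_span (by simp)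
      · have hSmem : S ∈ Submodule.span k {E 0, E 1, E 2, sm, sn} := by
          rw [hSsum]
          refine add_mem (add_mem (add_mem (add_mem ?_ ?_) ?_) ?_) ?_ <;>
            exact Submodule.subset_span (by simp)
        rcases hx with h | h | h | h | h <;> rw [h]
        · rw [hu0]; exact Submodule.subset_span (by simp)
        · rw [hu1]; exact Submodule.subset_span (by simp)
        · rw [hu2]; exact Submodule.subset_span (by simp)
        · rw [hu3]; exact hSmem
        · rw [hu4]; exact Submodule.subset_span (by simp)
    have hB : Submodule.span k {E 3 + E 4, E 3 + E 5, E 6 + E 7, E 6 + E 8} =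
        Submodule.span k (⇑b '' {5,6,7,8}) := by
      rw [hb]
      have himg : u '' {5,6,7,8} = {u 5, u 6, u 7, u 8} := by
        simp [Set.image_insert_eq]
      rw [himg, hu5, hu6, hu7, hu8]
    rw [hA, hB]
    constructor
    · rw [Submodule.disjoint_def]
      intro x hx1 hx2
      have s1 := b.repr_support_subset_of_mem_span _ hx1
      have s2 := b.repr_support_subset_of_mem_span _ hx2
      have hz : b.repr x = 0 := by
        ext i
        by_contra hne
        have hi := Finsupp.mem_support_iff.mpr hne
        have h1 := s1 hi
        have h2 := s2 hi
        simp only [Set.mem_insert_iff, Set.mem_singleton_iff] at h1 h2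
        fin_cases i <;>
          first
          | exact absurd h1 (by decide)
          | exact absurd h2 (by decide)
      exact b.repr.map_eq_zero_iff.mp hz
    · rw [codisjoint_iff, ← Submodule.span_union, ← Set.image_union]
      have huniv : ({0,1,2,3,4} : Set (Fin 9)) ∪ {5,6,7,8} = Set.univ := by
        ext i
        simp only [Set.mem_union, Set.mem_insert_iff, Set.mem_singleton_iff,
          Set.mem_univ, iff_true]
        fin_cases i <;> decide
      rw [huniv, Set.image_univ, b.span_eq]
  exact ⟨hG1, hG2, hG3, hG4, hG5, hG6⟩
end
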